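/- arXiv:2007.00118 — 2 statements merged into one kernel-verified Lean document; each statement's English description precedes it below -/
import Mathlib

section
/- Let f : [0,1) → ℝ, d ≥ 1 and 1 ≤ ν ≤ d. Then the span of the partial evaluations of the level-d tensorization, T_{b,d−ν}^{−1}(span{(T_{b,d}f)(j_1,...,j_ν,·) : (j_1,...,j_ν) ∈ {0,...,b-1}^ν}), equals span{(T_{b,ν}f)(j_1,...,j_ν,·) : (j_1,...,j_ν) ∈ {0,...,b-1}^ν} = span{f(b^{−ν}(j+·)) : 0 ≤ j ≤ b^ν − 1}. Consequently the ν-th rank r_{ν,d}(f) := dim span{(T_{b,d}f)(j_β,·)} is independent of d ≥ ν: r_{ν,d}(f) = r_{ν,ν}(f) = dim span{f(b^{−ν}(j+·)) : 0 ≤ j ≤ b^ν − 1}. -/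
/-- The conversion map `t_{b,d}(i_1,...,i_d,y) = ∑_{k=1}^d i_k b^{-k} + b^{-d} y`. -/
noncomputable def convMap (b d : ℕ) (i : ℕ → ℕ) (y : ℝ) : ℝ :=
  (∑ k ∈ Finset.range d, (i k : ℝ) / (b : ℝ) ^ (k + 1)) + y / (b : ℝ) ^ d

/-- Tensorization at level `m`: `(T_{b,m} g)(i,y) = g(t_{b,m}(i,y))`. -/
noncomputable def Tmap (b m : ℕ) (g : ℝ → ℝ) : (ℕ → ℕ) × ℝ → ℝ :=
  fun p => g (convMap b m p.1 p.2)

/-- Partial evaluation of `T_{b,d} f` fixing the first `ν` digits to `i`. -/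
noncomputable def partialEval (b d ν : ℕ) (f : ℝ → ℝ) (i : ℕ → ℕ) : (ℕ → ℕ) × ℝ → ℝ :=
  fun p => f (convMap b d (fun k => if k < ν then i k else p.1 (k - ν)) p.2)

/- ### Auxiliary lemmas -/

lemma aux_sum_lt (b ν : ℕ) (hb : 2 ≤ b) (c : ℕ → ℕ) (h : ∀ l < ν, c l < b) :
    ∑ l ∈ Finset.range ν, c l * b ^ l < b ^ ν := by
  induction ν with
  | zero => simp
  | succ n ih =>
    rw [Finset.sum_range_succ]
    have h1 : ∑ l ∈ Finset.range n, c l * b ^ l < b ^ n :=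
      ih (fun l hl => h l (Nat.lt_succ_of_lt hl))
    have h2 : c n * b ^ n ≤ (b - 1) * b ^ n :=
      Nat.mul_le_mul_right _ (by have := h n (Nat.lt_succ_self n); omega)
    have hbn : 0 < b ^ n := Nat.pow_pos (by omega)
    have : b ^ (n + 1) = b * b ^ n := by ring
    rw [this]
    calc ∑ l ∈ Finset.range n, c l * b ^ l + c n * b ^ n
        < b ^ n + (b - 1) * b ^ n := by omega
      _ = b * b ^ n := by
          have : b ^ n + (b - 1) * b ^ n = (1 + (b - 1)) * b ^ n := by ring
          rw [this]; congr 1; omega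

lemma aux_mod_sum (b ν j : ℕ) :
    ∑ l ∈ Finset.range ν, (j / b ^ l % b) * b ^ l = j % b ^ ν := by
  induction ν with
  | zero => simp [Nat.mod_one]
  | succ n ih =>
    rw [Finset.sum_range_succ, ih, pow_succ, Nat.mod_mul]
    ring

lemma aux_digits_sum (b ν j : ℕ) (hj : j < b ^ ν) :
    ∑ l ∈ Finset.range ν, (j / b ^ l % b) * b ^ l = j := by
  rw [aux_mod_sum, Nat.mod_eq_of_lt hj]

/-- Real digit sum identity. -/
lemma aux_real_sum (b ν : ℕ) (hb : 2 ≤ b) (i : ℕ → ℕ) :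
    ∑ k ∈ Finset.range ν, (i k : ℝ) / (b : ℝ) ^ (k + 1)
      = ((∑ k ∈ Finset.range ν, i k * b ^ (ν - 1 - k) : ℕ) : ℝ) / (b : ℝ) ^ ν := by
  have hbpos : (0 : ℝ) < (b : ℝ) := by positivity
  push_cast
  rw [Finset.sum_div]
  refine Finset.sum_congr rfl (fun k hk => ?_)
  rw [Finset.mem_range] at hk
  rw [div_eq_div_iff (by positivity) (by positivity)]
  rw [mul_assoc, ← pow_add]
  congr 2
  omega

lemma conv_eq_div (b ν : ℕ) (hb : 2 ≤ b) (i : ℕ → ℕ) (y : ℝ) :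
    convMap b ν i y = (((∑ k ∈ Finset.range ν, i k * b ^ (ν - 1 - k) : ℕ) : ℝ) + y) / (b : ℝ) ^ ν := by
  rw [convMap, aux_real_sum b ν hb i, ← add_div]

/-- The key set equality between the digit-indexed set and the `j`-indexed set. -/
lemma set_eq (b ν : ℕ) (hb : 2 ≤ b) (f : ℝ → ℝ) :
    {h : ℝ → ℝ | ∃ i : ℕ → ℕ, (∀ k < ν, i k < b) ∧ h = fun y => f (convMap b ν i y)}
      = {h : ℝ → ℝ | ∃ j : ℕ, j < b ^ ν ∧ h = fun y => f (((j : ℝ) + y) / (b : ℝ) ^ ν)} := by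
  ext h
  constructor
  · rintro ⟨i, hi, rfl⟩
    refine ⟨∑ k ∈ Finset.range ν, i k * b ^ (ν - 1 - k), ?_, ?_⟩
    · rw [← Finset.sum_range_reflect (fun k => i k * b ^ (ν - 1 - k)) ν]
      have : ∀ l ∈ Finset.range ν, i (ν - 1 - l) * b ^ (ν - 1 - (ν - 1 - l))
          = i (ν - 1 - l) * b ^ l := by
        intro l hl; rw [Finset.mem_range] at hl; congr 2; omega
      rw [Finset.sum_congr rfl this]
      exact aux_sum_lt b ν hb _ (fun l hl => hi _ (by omega))
    · funext y
      rw [conv_eq_div b ν hb i y]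
  · rintro ⟨j, hj, rfl⟩
    refine ⟨fun k => j / b ^ (ν - 1 - k) % b, fun k _ => Nat.mod_lt _ (by omega), ?_⟩
    funext y
    rw [conv_eq_div b ν hb _ y]
    have key : ∀ k ∈ Finset.range ν,
        (j / b ^ (ν - 1 - (ν - 1 - k)) % b) * b ^ (ν - 1 - (ν - 1 - k))
          = (j / b ^ k % b) * b ^ k := by
      intro k hk; rw [Finset.mem_range] at hk
      have he : ν - 1 - (ν - 1 - k) = k := by omega
      rw [he]
    have hsum : ∑ k ∈ Finset.range ν, (j / b ^ (ν - 1 - k) % b) * b ^ (ν - 1 - k) = j := by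
      rw [← Finset.sum_range_reflect (fun k => (j / b ^ (ν - 1 - k) % b) * b ^ (ν - 1 - k)) ν,
        Finset.sum_congr rfl key, aux_digits_sum b ν j hj]
    rw [hsum]

/-- `partialEval` factors through the lower-level tensorization. -/
lemma partialEval_eq (b d ν : ℕ) (hb : 2 ≤ b) (hνd : ν ≤ d) (f : ℝ → ℝ) (i : ℕ → ℕ) :
    partialEval b d ν f i = Tmap b (d - ν) (fun y => f (convMap b ν i y)) := by
  have hbpos : (0 : ℝ) < (b : ℝ) := by positivity
  funext p
  obtain ⟨m, rfl⟩ : ∃ m, d = ν + m := ⟨d - ν, by omega⟩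
  simp only [partialEval, Tmap, convMap]
  have hm : ν + m - ν = m := by omega
  rw [hm]
  congr 1
  rw [Finset.sum_range_add]
  have h1 : ∀ k ∈ Finset.range ν,
      ((if k < ν then i k else p.1 (k - ν) : ℕ) : ℝ) / (b:ℝ) ^ (k+1) = (i k : ℝ) / (b:ℝ) ^ (k+1) := by
    intro k hk; rw [Finset.mem_range] at hk; rw [if_pos hk]
  have h2 : ∀ l ∈ Finset.range m,
      ((if ν + l < ν then i (ν+l) else p.1 (ν + l - ν) : ℕ) : ℝ) / (b:ℝ) ^ (ν+l+1)
        = (p.1 l : ℝ) / (b:ℝ) ^ (ν+l+1) := by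
    intro l _
    rw [if_neg (by omega)]
    have hl2 : ν + l - ν = l := by omega
    rw [hl2]
  rw [Finset.sum_congr rfl h1, Finset.sum_congr rfl h2]
  rw [add_assoc, add_div, Finset.sum_div]
  congr 1
  congr 1
  · refine Finset.sum_congr rfl (fun l _ => ?_)
    rw [div_div, ← pow_add]
    congr 2
    omega
  · rw [div_div, ← pow_add, Nat.add_comm m ν]

/-- `T_{b,d−ν}^{−1}(span of the partial evaluations of T_{b,d}f)` equals
`span{(T_{b,ν}f)(j,·)} = span{f(b^{−ν}(j+·)) : 0 ≤ j < b^ν}`; consequently the rank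
`r_{ν,d}(f)` is independent of `d ≥ ν`. -/
theorem stmt12 (b d ν : ℕ) (hb : 2 ≤ b) (hν : 1 ≤ ν) (hνd : ν ≤ d) (f : ℝ → ℝ) :
    (∀ g : ℝ → ℝ,
      Tmap b (d - ν) g ∈ Submodule.span ℝ
          {F : (ℕ → ℕ) × ℝ → ℝ | ∃ i : ℕ → ℕ, (∀ k < ν, i k < b) ∧ F = partialEval b d ν f i}
        ↔ g ∈ Submodule.span ℝ
          {h : ℝ → ℝ | ∃ i : ℕ → ℕ, (∀ k < ν, i k < b) ∧ h = fun y => f (convMap b ν i y)}) ∧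
    Submodule.span ℝ
        {h : ℝ → ℝ | ∃ i : ℕ → ℕ, (∀ k < ν, i k < b) ∧ h = fun y => f (convMap b ν i y)}
      = Submodule.span ℝ
        {h : ℝ → ℝ | ∃ j : ℕ, j < b ^ ν ∧ h = fun y => f (((j : ℝ) + y) / (b : ℝ) ^ ν)} ∧
    Module.finrank ℝ (Submodule.span ℝ
        {F : (ℕ → ℕ) × ℝ → ℝ | ∃ i : ℕ → ℕ, (∀ k < ν, i k < b) ∧ F = partialEval b d ν f i})
      = Module.finrank ℝ (Submodule.span ℝ
        {h : ℝ → ℝ | ∃ j : ℕ, j < b ^ ν ∧ h = fun y => f (((j : ℝ) + y) / (b : ℝ) ^ ν)}) := by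
  have hbpos : (0 : ℝ) < (b : ℝ) := by positivity
  set m := d - ν with hm
  set φ : (ℕ → ℕ) × ℝ → ℝ := fun p => convMap b m p.1 p.2 with hφ
  set T : (ℝ → ℝ) →ₗ[ℝ] ((ℕ → ℕ) × ℝ → ℝ) := LinearMap.funLeft ℝ ℝ φ with hT
  have hTapp : ∀ g : ℝ → ℝ, T g = Tmap b m g := fun g => rfl
  have hφsurj : Function.Surjective φ := by
    intro t
    refine ⟨⟨fun _ => 0, t * (b : ℝ) ^ m⟩, ?_⟩
    simp [hφ, convMap, mul_div_assoc, div_self (by positivity : ((b:ℝ)^m) ≠ 0)]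
  have hTinj : Function.Injective T :=
    LinearMap.funLeft_injective_of_surjective ℝ ℝ φ hφsurj
  set Sν : Set (ℝ → ℝ) :=
    {h : ℝ → ℝ | ∃ i : ℕ → ℕ, (∀ k < ν, i k < b) ∧ h = fun y => f (convMap b ν i y)} with hSν
  have himg :
      {F : (ℕ → ℕ) × ℝ → ℝ | ∃ i : ℕ → ℕ, (∀ k < ν, i k < b) ∧ F = partialEval b d ν f i}
        = T '' Sν := by
    ext F
    constructor
    · rintro ⟨i, hi, rfl⟩
      exact ⟨fun y => f (convMap b ν i y), ⟨i, hi, rfl⟩,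
        (hTapp _).trans (partialEval_eq b d ν hb hνd f i).symm⟩
    · rintro ⟨g, ⟨i, hi, rfl⟩, rfl⟩
      exact ⟨i, hi, ((partialEval_eq b d ν hb hνd f i).trans ((hTapp _).symm)).symm⟩
  have hspan : Submodule.span ℝ
      {F : (ℕ → ℕ) × ℝ → ℝ | ∃ i : ℕ → ℕ, (∀ k < ν, i k < b) ∧ F = partialEval b d ν f i}
        = Submodule.map T (Submodule.span ℝ Sν) := by
    rw [himg, Submodule.span_image]
  refine ⟨?_, set_eq b ν hb f ▸ rfl, ?_⟩
  · intro g
    rw [← hTapp, hspan]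
    constructor
    · rintro hg
      obtain ⟨x, hx, hxg⟩ := Submodule.mem_map.mp hg
      rwa [← hTinj hxg]
    · intro hg
      exact Submodule.mem_map_of_mem hg
  · rw [hspan, ← set_eq b ν hb f, ← hSν]
    exact ((Submodule.equivMapOfInjective T hTinj (Submodule.span ℝ Sν)).symm.finrank_eq)
end

section
/- The ranks of a tensorized function satisfy the admissibility conditions: for any f : [0,1) → ℝ, d ≥ 1 and 1 ≤ ν ≤ d − 1, r_{ν+1}(f) ≤ b·r_ν(f) and r_ν(f) ≤ b·r_{ν+1}(f), where r_ν(f) := dim span{f(b^{−ν}(j+·)) : 0 ≤ j ≤ b^ν − 1}. -/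
open Submodule Module

private lemma findim_finset_sup {ι : Type*} [DecidableEq ι] (s : Finset ι)
    (p : ι → Submodule ℝ (ℝ → ℝ)) (hp : ∀ i, FiniteDimensional ℝ (p i)) :
    FiniteDimensional ℝ ↥(s.sup p) := by
  induction s using Finset.induction with
  | empty =>
      rw [Finset.sup_empty]
      exact (inferInstance : FiniteDimensional ℝ (⊥ : Submodule ℝ (ℝ → ℝ)))
  | @insert a s ha ih =>
      rw [Finset.sup_insert]
      haveI := ih
      haveI := hp a
      exact Submodule.finiteDimensional_sup _ _

private lemma finrank_finset_sup_le {ι : Type*} [DecidableEq ι] (s : Finset ι)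
    (p : ι → Submodule ℝ (ℝ → ℝ)) (hp : ∀ i, FiniteDimensional ℝ (p i)) :
    Module.finrank ℝ ↥(s.sup p) ≤ ∑ i ∈ s, Module.finrank ℝ (p i) := by
  induction s using Finset.induction with
  | empty => simp
  | @insert a s ha ih =>
      rw [Finset.sup_insert, Finset.sum_insert ha]
      haveI := hp a
      haveI := findim_finset_sup s p hp
      exact le_trans (Submodule.finrank_add_le_finrank_add_finrank _ _)
        (Nat.add_le_add_left ih _)

/-- The `ν`-th rank of `f`: the dimension of the span of the `b^ν` pieces of `f` on the
`b`-adic intervals of level `ν`, rescaled to `[0,1)`. -/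
noncomputable def rnk (b ν : ℕ) (f : ℝ → ℝ) : ℕ :=
  Module.finrank ℝ (Submodule.span ℝ
    {h : ℝ → ℝ | ∃ j : ℕ, j < b ^ ν ∧ h = fun y => f (((j : ℝ) + y) / (b : ℝ) ^ ν)})

/-- Ranks admissibility conditions: for `1 ≤ ν ≤ d − 1`,
`r_{ν+1}(f) ≤ b·r_ν(f)` and `r_ν(f) ≤ b·r_{ν+1}(f)`. -/
theorem stmt16 (b d ν : ℕ) (hb : 2 ≤ b) (hd : 1 ≤ d) (hν : 1 ≤ ν) (hνd : ν ≤ d - 1)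
    (f : ℝ → ℝ) :
    rnk b (ν + 1) f ≤ b * rnk b ν f ∧ rnk b ν f ≤ b * rnk b (ν + 1) f := by
  classical
  have hbpos : 0 < b := by omega
  have hb0 : (b : ℝ) ≠ 0 := by positivity
  set S : ℕ → Set (ℝ → ℝ) := fun m =>
    {h : ℝ → ℝ | ∃ j : ℕ, j < b ^ m ∧ h = fun y => f (((j : ℝ) + y) / (b : ℝ) ^ m)} with hS
  have hfin : ∀ m : ℕ, (S m).Finite := by
    intro m
    have hsub : S m ⊆ (fun j : ℕ => fun y => f (((j : ℝ) + y) / (b : ℝ) ^ m)) ''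
        (Set.Iio (b ^ m)) := by
      rintro h ⟨j, hj, rfl⟩
      exact ⟨j, hj, rfl⟩
    exact ((Set.finite_Iio _).image _).subset hsub
  haveI hFD : ∀ m : ℕ, FiniteDimensional ℝ (Submodule.span ℝ (S m)) := fun m =>
    FiniteDimensional.span_of_finite ℝ (hfin m)
  constructor
  · -- rnk (ν+1) ≤ b * rnk ν
    set p : ℕ → Submodule ℝ (ℝ → ℝ) := fun k =>
      (Submodule.span ℝ (S ν)).map (LinearMap.funLeft ℝ ℝ (fun y => ((k : ℝ) + y) / b)) with hp
    haveI hpFD : ∀ k, FiniteDimensional ℝ (p k) := fun k => Module.Finite.map _ _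
    have hle : Submodule.span ℝ (S (ν + 1)) ≤ (Finset.range b).sup p := by
      rw [Submodule.span_le]
      rintro h ⟨j, hj, rfl⟩
      have hk : j % b < b := Nat.mod_lt _ hbpos
      have hq : j / b < b ^ ν := by
        rw [Nat.div_lt_iff_lt_mul hbpos]
        calc j < b ^ (ν + 1) := hj
        _ = b ^ ν * b := by ring
      have hmem : (fun y => f (((j : ℝ) + y) / (b : ℝ) ^ (ν + 1))) ∈ p (j % b) := by
        refine ⟨fun y => f ((((j / b : ℕ) : ℝ) + y) / (b : ℝ) ^ ν), ?_, ?_⟩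
        · exact Submodule.subset_span ⟨j / b, hq, rfl⟩
        · ext y
          have hj' : (b : ℝ) * ((j / b : ℕ) : ℝ) + ((j % b : ℕ) : ℝ) = (j : ℝ) := by
            exact_mod_cast congrArg (Nat.cast : ℕ → ℝ) (Nat.div_add_mod j b)
          simp only [LinearMap.funLeft_apply]
          congr 1
          rw [← hj']
          field_simp
          ring
      exact (Finset.le_sup (Finset.mem_range.mpr hk) : p (j % b) ≤ _) hmem
    haveI := findim_finset_sup (Finset.range b) p hpFD
    calc rnk b (ν + 1) f ≤ Module.finrank ℝ ↥((Finset.range b).sup p) :=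
          Submodule.finrank_mono hle
      _ ≤ ∑ k ∈ Finset.range b, Module.finrank ℝ (p k) :=
          finrank_finset_sup_le _ _ hpFD
      _ ≤ ∑ _k ∈ Finset.range b, rnk b ν f := by
          refine Finset.sum_le_sum fun k _ => ?_
          exact Submodule.finrank_map_le _ _
      _ = b * rnk b ν f := by simp [Finset.sum_const, mul_comm]
  · -- rnk ν ≤ b * rnk (ν+1)
    have hle : Submodule.span ℝ (S ν) ≤
        (Submodule.span ℝ (S (ν + 1))).map (LinearMap.funLeft ℝ ℝ (fun y => (b : ℝ) * y)) := by
      rw [Submodule.span_le]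
      rintro h ⟨j, hj, rfl⟩
      have hjb : j * b < b ^ (ν + 1) := by
        calc j * b < b ^ ν * b := (Nat.mul_lt_mul_right hbpos).mpr hj
        _ = b ^ (ν + 1) := by ring
      refine ⟨fun y => f ((((j * b : ℕ) : ℝ) + y) / (b : ℝ) ^ (ν + 1)), ?_, ?_⟩
      · exact Submodule.subset_span ⟨j * b, hjb, rfl⟩
      · ext y
        simp only [LinearMap.funLeft_apply]
        congr 1
        push_cast
        field_simp
        ring
    haveI := Module.Finite.map (Submodule.span ℝ (S (ν + 1)))
      (LinearMap.funLeft ℝ ℝ (fun y => (b : ℝ) * y))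
    calc rnk b ν f ≤ Module.finrank ℝ ((Submodule.span ℝ (S (ν + 1))).map
          (LinearMap.funLeft ℝ ℝ (fun y => (b : ℝ) * y))) := Submodule.finrank_mono hle
      _ ≤ rnk b (ν + 1) f := Submodule.finrank_map_le _ _
      _ ≤ b * rnk b (ν + 1) f := Nat.le_mul_of_pos_left _ hbpos
end
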